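/- For every n ≥ 2, the number of 231-avoiding permutations of length n with π(1) > π(2) and π(2) < π(3) equals C_{n−1}. -/

import Mathlib

def Avoids231 {n : ℕ} (π : Fin n → Fin n) : Prop :=
  ¬ ∃ i j k : Fin n, i < j ∧ j < k ∧ π k < π i ∧ π i < π j

namespace Count231

open Equiv Finset

noncomputable def mkPerm {k : ℕ} (f : Fin k → Fin k) (hf : Function.Injective f) :
    Equiv.Perm (Fin k) :=
  Equiv.ofBijective f (Finite.injective_iff_bijective.mp hf)

@[simp] lemma mkPerm_apply {k : ℕ} (f : Fin k → Fin k) (hf : Function.Injective f) (x : Fin k) :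
    mkPerm f hf x = f x := rfl

abbrev AvPerm (k : ℕ) := {π : Equiv.Perm (Fin k) // Avoids231 ⇑π}

def phi {k : ℕ} (π : Equiv.Perm (Fin k)) : ℕ → ℕ :=
  fun i => if h : i < k then (π ⟨i, h⟩ : ℕ) else 0

lemma phi_inj {k : ℕ} : Function.Injective (phi (k := k)) := by
  intro π π' h
  apply Equiv.ext
  intro i
  have h2 := congrFun h i.val
  simp only [phi, i.isLt, dif_pos, Fin.eta] at h2
  exact Fin.ext h2

def valFn {k : ℕ} (f : Fin k → Fin k) : ℕ → ℕ :=
  fun i => if h : i < k then (f ⟨i, h⟩ : ℕ) else 0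

lemma valFn_lt {k : ℕ} (f : Fin k → Fin k) {i : ℕ} (h : i < k) : valFn f i < k := by
  simp only [valFn, h, dif_pos]
  exact (f _).isLt

lemma valFn_eq {k : ℕ} (f : Fin k → Fin k) (i : Fin k) : valFn f i.val = (f i : ℕ) := by
  simp only [valFn, i.isLt, dif_pos, Fin.eta]

section Struct

variable {m : ℕ} (π : Equiv.Perm (Fin (m + 1)))

def posMax : Fin (m + 1) := π.symm (Fin.last m)

lemma posMax_le : (posMax π).val ≤ m := Fin.is_le _

lemma apply_posMax : π (posMax π) = Fin.last m := π.apply_symm_apply _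

lemma ne_posMax_lt {i : Fin (m + 1)} (h : i ≠ posMax π) : (π i).val < m := by
  have h1 : π i ≠ Fin.last m := by
    rw [← apply_posMax π]
    exact fun hh => h (π.injective hh)
  have h2 := Fin.is_le (π i)
  have h3 : (π i).val ≠ m := fun hh => h1 (Fin.ext (by simpa using hh))
  omega

lemma cross (hAv : Avoids231 ⇑π) {i k : Fin (m + 1)}
    (hi : i < posMax π) (hk : posMax π < k) : π i < π k := by
  have hik : π i ≠ π k := fun h => (hi.trans hk).ne (π.injective h)
  have hilt : π i < π (posMax π) := by
    rw [apply_posMax]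
    refine lt_of_le_of_ne (Fin.le_last _) ?_
    rw [← apply_posMax π]
    exact fun hh => hi.ne (π.injective hh)
  by_contra hnot
  exact hAv ⟨i, posMax π, k, hi, hk, lt_of_le_of_ne (not_lt.mp hnot) hik.symm, hilt⟩

lemma before_lt (hAv : Avoids231 ⇑π) {i : Fin (m + 1)}
    (hi : i < posMax π) : (π i).val < (posMax π).val := by
  by_contra hnot
  push_neg at hnot
  have him : (insert i (Finset.Ici (posMax π))).image π ⊆ Finset.Ici (π i) := by
    intro x hx
    simp only [Finset.mem_image, Finset.mem_insert, Finset.mem_Ici] at hx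
    obtain ⟨a, ha, rfl⟩ := hx
    simp only [Finset.mem_Ici]
    rcases ha with rfl | ha
    · exact le_refl _
    · rcases eq_or_lt_of_le ha with rfl | ha'
      · rw [apply_posMax]; exact Fin.le_last _
      · exact (cross π hAv hi ha').le
  have hnm : i ∉ Finset.Ici (posMax π) := by
    simp only [Finset.mem_Ici]
    exact not_le.mpr hi
  have hc1 : ((insert i (Finset.Ici (posMax π))).image π).card = (m + 1 - (posMax π).val) + 1 := by
    rw [Finset.card_image_of_injective _ π.injective,
      Finset.card_insert_of_notMem hnm, Fin.card_Ici]
  have hc2 := Finset.card_le_card him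
  rw [hc1, Fin.card_Ici] at hc2
  have h3 := posMax_le π
  have h4 : (π i).val ≤ m := Fin.is_le _
  omega

lemma after_le (hAv : Avoids231 ⇑π) {k : Fin (m + 1)}
    (hk : posMax π < k) : (posMax π).val ≤ (π k).val := by
  have himg : (Finset.Iio (posMax π)).image π = Finset.Iio (posMax π) := by
    apply Finset.eq_of_subset_of_card_le
    · intro x hx
      simp only [Finset.mem_image, Finset.mem_Iio] at hx ⊢
      obtain ⟨a, ha, rfl⟩ := hx
      exact Fin.lt_def.mpr (before_lt π hAv ha)
    · rw [Finset.card_image_of_injective _ π.injective]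
  by_contra hnot
  push_neg at hnot
  have : π k ∈ Finset.Iio (posMax π) := Finset.mem_Iio.mpr (Fin.lt_def.mpr hnot)
  rw [← himg] at this
  simp only [Finset.mem_image, Finset.mem_Iio] at this
  obtain ⟨a, ha, haeq⟩ := this
  have := π.injective haeq
  subst this
  exact absurd hk (not_lt.mpr ha.le)

end Struct


section Rec

variable {m : ℕ}

def SigTy (m : ℕ) := Σ p : Fin (m + 1), AvPerm (p : ℕ) × AvPerm (m - (p : ℕ))

instance : Finite (SigTy m) := by unfold SigTy; infer_instance

def psi (m p : ℕ) (l r : ℕ → ℕ) : ℕ → ℕ := fun i =>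
  if i < p then l i else if i = p then m else if i < m + 1 then p + r (i - (p + 1)) else 0

def psiSig (y : SigTy m) : ℕ → ℕ := psi m y.1.val (valFn ⇑y.2.1.1) (valFn ⇑y.2.2.1)

-- forward construction
variable (π : Equiv.Perm (Fin (m + 1))) (hAv : Avoids231 ⇑π)

def Lfun : Fin (posMax π).val → Fin (posMax π).val := fun i =>
  ⟨(π ⟨i.val, by have := i.isLt; have := posMax_le π; omega⟩ : ℕ),
    before_lt π hAv (Fin.lt_def.mpr i.isLt)⟩

lemma Lfun_inj : Function.Injective (Lfun π hAv) := by
  intro a b hab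
  have h1 := congrArg Fin.val hab
  simp only [Lfun] at h1
  have h2 : a = b := by
    have h3 : (⟨a.val, by have := a.isLt; have := posMax_le π; omega⟩ : Fin (m + 1))
        = ⟨b.val, by have := b.isLt; have := posMax_le π; omega⟩ := π.injective (Fin.ext h1)
    simp only [Fin.mk.injEq] at h3
    exact Fin.ext h3
  exact h2

lemma Lfun_av : Avoids231 (Lfun π hAv) := by
  rintro ⟨i, j, k, hij, hjk, h1, h2⟩
  have hple := posMax_le π
  refine hAv ⟨⟨i.val, by omega⟩, ⟨j.val, by omega⟩, ⟨k.val, by omega⟩,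
    Fin.lt_def.mpr hij, Fin.lt_def.mpr hjk, Fin.lt_def.mpr ?_, Fin.lt_def.mpr ?_⟩
  · exact Fin.lt_def.mp h1
  · exact Fin.lt_def.mp h2

def Rfun : Fin (m - (posMax π).val) → Fin (m - (posMax π).val) := fun j =>
  ⟨(π ⟨(posMax π).val + 1 + j.val, by have := j.isLt; have := posMax_le π; omega⟩ : ℕ)
      - (posMax π).val, by
    have hj := j.isLt
    have hple := posMax_le π
    have h1 := after_le π hAv (k := ⟨(posMax π).val + 1 + j.val, by omega⟩)
      (Fin.lt_def.mpr (by simp; omega))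
    have h2 := ne_posMax_lt π (i := ⟨(posMax π).val + 1 + j.val, by omega⟩)
      (by intro hh; have := congrArg Fin.val hh; simp at this; omega)
    omega⟩

lemma Rfun_inj : Function.Injective (Rfun π hAv) := by
  intro a b hab
  have h1 := congrArg Fin.val hab
  simp only [Rfun] at h1
  have hple := posMax_le π
  have ha := after_le π hAv (k := ⟨(posMax π).val + 1 + a.val, by have := a.isLt; omega⟩)
    (Fin.lt_def.mpr (by simp; omega))
  have hb := after_le π hAv (k := ⟨(posMax π).val + 1 + b.val, by have := b.isLt; omega⟩)
    (Fin.lt_def.mpr (by simp; omega))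
  have h2 : (π ⟨(posMax π).val + 1 + a.val, by have := a.isLt; omega⟩).val
      = (π ⟨(posMax π).val + 1 + b.val, by have := b.isLt; omega⟩).val := by omega
  have := π.injective (Fin.ext h2)
  have h3 := congrArg Fin.val this
  simp only at h3
  exact Fin.ext (by omega)

lemma Rfun_av : Avoids231 (Rfun π hAv) := by
  rintro ⟨i, j, k, hij, hjk, h1, h2⟩
  have hple := posMax_le π
  have hi := i.isLt; have hj := j.isLt; have hk := k.isLt
  have hvi := after_le π hAv (k := ⟨(posMax π).val + 1 + i.val, by omega⟩)
    (Fin.lt_def.mpr (by simp; omega))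
  have hvj := after_le π hAv (k := ⟨(posMax π).val + 1 + j.val, by omega⟩)
    (Fin.lt_def.mpr (by simp; omega))
  have hvk := after_le π hAv (k := ⟨(posMax π).val + 1 + k.val, by omega⟩)
    (Fin.lt_def.mpr (by simp; omega))
  have hv1 := Fin.lt_def.mp h1
  have hv2 := Fin.lt_def.mp h2
  simp only [Rfun] at hv1 hv2
  refine hAv ⟨⟨(posMax π).val + 1 + i.val, by omega⟩, ⟨(posMax π).val + 1 + j.val, by omega⟩,
    ⟨(posMax π).val + 1 + k.val, by omega⟩,
    Fin.lt_def.mpr (by simp; omega), Fin.lt_def.mpr (by simp; omega),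
    Fin.lt_def.mpr (by omega), Fin.lt_def.mpr (by omega)⟩

noncomputable def fwd (x : AvPerm (m + 1)) : SigTy m :=
  ⟨posMax x.1,
    (⟨mkPerm (Lfun x.1 x.2) (Lfun_inj x.1 x.2), Lfun_av x.1 x.2⟩,
     ⟨mkPerm (Rfun x.1 x.2) (Rfun_inj x.1 x.2), Rfun_av x.1 x.2⟩)⟩

lemma psiSig_fwd (x : AvPerm (m + 1)) : psiSig (fwd x) = phi x.1 := by
  obtain ⟨π, hAv⟩ := x
  funext i
  have hple := posMax_le π
  show psi m (posMax π).val (valFn ⇑(mkPerm (Lfun π hAv) (Lfun_inj π hAv)))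
    (valFn ⇑(mkPerm (Rfun π hAv) (Rfun_inj π hAv))) i = phi π i
  simp only [psi, phi]
  rcases lt_trichotomy i (posMax π).val with h | h | h
  · rw [if_pos h, dif_pos (by omega)]
    simp only [valFn]
    rw [dif_pos h]
    rfl
  · rw [if_neg (by omega), if_pos h]
    subst h
    rw [dif_pos (by omega : (posMax π).val < m + 1)]
    rw [show (⟨(posMax π).val, by omega⟩ : Fin (m + 1)) = posMax π from Fin.ext rfl,
      apply_posMax]
    rfl
  · by_cases hm : i < m + 1
    · rw [if_neg (by omega), if_neg (by omega), if_pos hm, dif_pos hm]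
      have harg : i - ((posMax π).val + 1) < m - (posMax π).val := by omega
      simp only [valFn]
      rw [dif_pos harg]
      simp only [mkPerm_apply, Rfun]
      have hpos : (⟨(posMax π).val + 1 + (i - ((posMax π).val + 1)), by omega⟩ : Fin (m + 1))
          = ⟨i, hm⟩ := Fin.ext (by simp; omega)
      rw [hpos]
      have := after_le π hAv (k := ⟨i, hm⟩) (Fin.lt_def.mpr (by simp; omega))
      omega
    · rw [if_neg (by omega), if_neg (by omega), if_neg hm, dif_neg hm]

lemma fwd_inj : Function.Injective (fwd (m := m)) := by
  intro x y h
  have h2 : phi x.1 = phi y.1 := by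
    rw [← psiSig_fwd, ← psiSig_fwd, h]
  exact Subtype.ext (phi_inj h2)

-- backward construction
section Bwd

variable (y : SigTy m)

lemma psiSig_le (i : ℕ) : psiSig y i ≤ m := by
  obtain ⟨p, L, R⟩ := y
  have hp := p.isLt
  simp only [psiSig, psi]
  split
  · next h => have := valFn_lt (⇑L.1) h; omega
  · split
    · omega
    · split
      · next h1 h2 h3 =>
        have := valFn_lt (⇑R.1) (show i - (p.val + 1) < m - p.val by omega)
        omega
      · omega

lemma psiSig_lt_of_lt {i : ℕ} (h : i < (y.1 : ℕ)) : psiSig y i < (y.1 : ℕ) := by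
  obtain ⟨p, L, R⟩ := y
  simp only [psiSig, psi, if_pos h]
  exact valFn_lt _ h

lemma psiSig_eq_of_eq : psiSig y (y.1 : ℕ) = m := by
  obtain ⟨p, L, R⟩ := y
  simp [psiSig, psi]

lemma psiSig_ge_of_gt {i : ℕ} (h1 : (y.1 : ℕ) < i) (h2 : i < m + 1) :
    (y.1 : ℕ) ≤ psiSig y i ∧ psiSig y i < m := by
  obtain ⟨p, L, R⟩ := y
  replace h1 : (p : ℕ) < i := h1
  show (p : ℕ) ≤ psi m p.val (valFn ⇑L.1) (valFn ⇑R.1) i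
    ∧ psi m p.val (valFn ⇑L.1) (valFn ⇑R.1) i < m
  simp only [psi, if_neg (by omega : ¬ i < p.val), if_neg (by omega : ¬ i = p.val),
    if_pos h2]
  have := valFn_lt (⇑R.1) (show i - (p.val + 1) < m - p.val by omega)
  omega

def bwdFun : Fin (m + 1) → Fin (m + 1) := fun i =>
  ⟨psiSig y i.val, by have := psiSig_le y i.val; omega⟩

lemma bwdFun_inj : Function.Injective (bwdFun y) := by
  have hp := y.1.isLt
  intro a b hab
  have hab' : psiSig y a.val = psiSig y b.val := congrArg Fin.val hab
  have ha := a.isLt; have hb := b.isLt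
  -- zone analysis
  rcases lt_trichotomy a.val (y.1 : ℕ) with hA | hA | hA <;>
    rcases lt_trichotomy b.val (y.1 : ℕ) with hB | hB | hB
  · -- both < p : use L injective
    obtain ⟨p, L, R⟩ := y
    simp only [psiSig, psi, if_pos hA, if_pos hB] at hab'
    simp only [valFn, dif_pos hA, dif_pos hB] at hab'
    have := L.1.injective (Fin.ext hab')
    simp only [Fin.mk.injEq] at this
    exact Fin.ext this
  · exact absurd hab' (by
      have e1 := psiSig_lt_of_lt y hA
      have e2 : psiSig y b.val = m := by rw [hB]; exact psiSig_eq_of_eq y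
      omega)
  · exact absurd hab' (by
      have e1 := psiSig_lt_of_lt y hA
      have e2 := psiSig_ge_of_gt y hB hb
      omega)
  · exact absurd hab' (by
      have e1 : psiSig y a.val = m := by rw [hA]; exact psiSig_eq_of_eq y
      have e2 := psiSig_lt_of_lt y hB
      omega)
  · exact Fin.ext (by omega)
  · exact absurd hab' (by
      have e1 : psiSig y a.val = m := by rw [hA]; exact psiSig_eq_of_eq y
      have e2 := psiSig_ge_of_gt y hB hb
      omega)
  · exact absurd hab' (by
      have e1 := psiSig_lt_of_lt y hB
      have e2 := psiSig_ge_of_gt y hA ha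
      omega)
  · exact absurd hab' (by
      have e1 : psiSig y b.val = m := by rw [hB]; exact psiSig_eq_of_eq y
      have e2 := psiSig_ge_of_gt y hA ha
      omega)
  · -- both > p : use R injective
    obtain ⟨p, L, R⟩ := y
    replace hA : (p:ℕ) < a.val := hA
    replace hB : (p:ℕ) < b.val := hB
    simp only [psiSig, psi, if_neg (by omega : ¬ a.val < p.val),
      if_neg (by omega : ¬ a.val = p.val), if_pos ha,
      if_neg (by omega : ¬ b.val < p.val), if_neg (by omega : ¬ b.val = p.val),
      if_pos hb] at hab'
    have h1 : valFn (⇑R.1) (a.val - (p.val + 1)) = valFn (⇑R.1) (b.val - (p.val + 1)) := by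
      omega
    have hA' : a.val - (p.val + 1) < m - p.val := by omega
    have hB' : b.val - (p.val + 1) < m - p.val := by omega
    simp only [valFn, dif_pos hA', dif_pos hB'] at h1
    have := R.1.injective (Fin.ext h1)
    simp only [Fin.mk.injEq] at this
    exact Fin.ext (by omega)

lemma bwdFun_av : Avoids231 (bwdFun y) := by
  rintro ⟨i, j, k, hij, hjk, h1, h2⟩
  have hp := y.1.isLt
  have hi := i.isLt; have hj := j.isLt; have hk := k.isLt
  have hij' := Fin.lt_def.mp hij
  have hjk' := Fin.lt_def.mp hjk
  have h1' : psiSig y k.val < psiSig y i.val := Fin.lt_def.mp h1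
  have h2' : psiSig y i.val < psiSig y j.val := Fin.lt_def.mp h2
  rcases lt_trichotomy i.val (y.1 : ℕ) with hA | hA | hA
  · -- i in left zone; then k in left zone, hence all in left zone
    have hxi := psiSig_lt_of_lt y hA
    have hkz : k.val < (y.1 : ℕ) := by
      rcases lt_trichotomy k.val (y.1 : ℕ) with h | h | h
      · exact h
      · exfalso
        have e1 : psiSig y k.val = m := by rw [h]; exact psiSig_eq_of_eq y
        omega
      · have := psiSig_ge_of_gt y h hk; omega
    have hjz : j.val < (y.1 : ℕ) := by omega
    obtain ⟨p, L, R⟩ := y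
    replace hA : i.val < (p:ℕ) := hA
    replace hjz : j.val < (p:ℕ) := hjz
    replace hkz : k.val < (p:ℕ) := hkz
    simp only [psiSig, psi, if_pos hA, if_pos hjz, if_pos hkz, valFn,
      dif_pos hA, dif_pos hjz, dif_pos hkz] at h1' h2'
    exact L.2 ⟨⟨i.val, hA⟩, ⟨j.val, hjz⟩, ⟨k.val, hkz⟩, Fin.mk_lt_mk.mpr hij',
      Fin.mk_lt_mk.mpr hjk', Fin.lt_def.mpr h1', Fin.lt_def.mpr h2'⟩
  · -- i = p : impossible since psi j > m
    have e1 : psiSig y i.val = m := by rw [hA]; exact psiSig_eq_of_eq y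
    have := psiSig_le y j.val
    omega
  · -- i in right zone; then j, k as well
    have hjz : (y.1 : ℕ) < j.val := by omega
    have hkz : (y.1 : ℕ) < k.val := by omega
    obtain ⟨p, L, R⟩ := y
    replace hA : (p:ℕ) < i.val := hA
    replace hjz : (p:ℕ) < j.val := hjz
    replace hkz : (p:ℕ) < k.val := hkz
    simp only [psiSig, psi, if_neg (by omega : ¬ i.val < p.val),
      if_neg (by omega : ¬ i.val = p.val), if_pos hi,
      if_neg (by omega : ¬ j.val < p.val), if_neg (by omega : ¬ j.val = p.val), if_pos hj,
      if_neg (by omega : ¬ k.val < p.val), if_neg (by omega : ¬ k.val = p.val), if_pos hk]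
      at h1' h2'
    have hA' : i.val - (p.val + 1) < m - p.val := by omega
    have hB' : j.val - (p.val + 1) < m - p.val := by omega
    have hC' : k.val - (p.val + 1) < m - p.val := by omega
    simp only [valFn, dif_pos hA', dif_pos hB', dif_pos hC'] at h1' h2'
    exact R.2 ⟨⟨i.val - (p.val + 1), hA'⟩, ⟨j.val - (p.val + 1), hB'⟩,
      ⟨k.val - (p.val + 1), hC'⟩, Fin.mk_lt_mk.mpr (by omega), Fin.mk_lt_mk.mpr (by omega),
      Fin.lt_def.mpr (by omega), Fin.lt_def.mpr (by omega)⟩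

noncomputable def bwd (y : SigTy m) : AvPerm (m + 1) :=
  ⟨mkPerm (bwdFun y) (bwdFun_inj y), bwdFun_av y⟩

lemma phi_bwd (y : SigTy m) : phi (bwd y).1 = psiSig y := by
  funext i
  simp only [phi, bwd]
  by_cases h : i < m + 1
  · rw [dif_pos h]; rfl
  · rw [dif_neg h]
    obtain ⟨p, L, R⟩ := y
    simp only [psiSig, psi]
    have hp := p.isLt
    rw [if_neg (by omega), if_neg (by omega), if_neg (by omega)]

lemma bwd_inj : Function.Injective (bwd (m := m)) := by
  intro a b hab
  have h1 : psiSig a = psiSig b := by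
    rw [← phi_bwd, ← phi_bwd, hab]
  -- recover p
  obtain ⟨p, L, R⟩ := a
  obtain ⟨q, L', R'⟩ := b
  have hp := p.isLt; have hq := q.isLt
  have hpq : p = q := by
    by_contra hne
    rcases lt_trichotomy p.val q.val with h | h | h
    · have e1 := psiSig_eq_of_eq ⟨p, L, R⟩
      have e2 := psiSig_lt_of_lt ⟨q, L', R'⟩ (show (p:ℕ) < (q:ℕ) from h)
      rw [congrFun h1 p.val] at e1
      simp only at e1 e2
      omega
    · exact hne (Fin.ext h)
    · have e1 := psiSig_eq_of_eq ⟨q, L', R'⟩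
      have e2 := psiSig_lt_of_lt ⟨p, L, R⟩ (show (q:ℕ) < (p:ℕ) from h)
      rw [← congrFun h1 q.val] at e1
      simp only at e1 e2
      omega
  subst hpq
  have hL : L = L' := by
    apply Subtype.ext; apply Equiv.ext; intro x
    have hx := x.isLt
    have h2 := congrFun h1 x.val
    simp only [psiSig, psi, if_pos hx, valFn, dif_pos hx, Fin.eta] at h2
    exact Fin.ext h2
  have hR : R = R' := by
    apply Subtype.ext; apply Equiv.ext; intro x
    have hx := x.isLt
    have h2 := congrFun h1 (p.val + 1 + x.val)
    simp only [psiSig, psi, if_neg (by omega : ¬ p.val + 1 + x.val < p.val),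
      if_neg (by omega : ¬ p.val + 1 + x.val = p.val),
      if_pos (by omega : p.val + 1 + x.val < m + 1)] at h2
    rw [show p.val + 1 + x.val - (p.val + 1) = x.val by omega] at h2
    simp only [valFn, dif_pos hx, Fin.eta] at h2
    exact Fin.ext (by omega)
  rw [hL, hR]

end Bwd

section Card

lemma natCard_sigma {ι : Type*} [Fintype ι] (α : ι → Type*) [∀ i, Finite (α i)] :
    Nat.card (Sigma α) = ∑ i, Nat.card (α i) := by
  letI := fun i => Fintype.ofFinite (α i)
  rw [Nat.card_eq_fintype_card, Fintype.card_sigma]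
  simp [Nat.card_eq_fintype_card]

noncomputable def avCard (k : ℕ) : ℕ := Nat.card (AvPerm k)

lemma avCard_zero : avCard 0 = 1 := by
  haveI : Unique (AvPerm 0) :=
    { default := ⟨1, by rintro ⟨i, -⟩; exact i.elim0⟩
      uniq := by
        rintro ⟨π, h⟩
        apply Subtype.ext
        apply Equiv.ext
        intro i
        exact i.elim0 }
  exact Nat.card_unique

lemma avCard_succ (m : ℕ) : avCard (m + 1) = ∑ i : Fin (m + 1), avCard i * avCard (m - i) := by
  have h1 : Nat.card (AvPerm (m + 1)) = Nat.card (SigTy m) :=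
    le_antisymm (Nat.card_le_card_of_injective _ fwd_inj)
      (Nat.card_le_card_of_injective _ bwd_inj)
  rw [avCard, h1, SigTy, natCard_sigma]
  simp [Nat.card_prod, avCard]

lemma avCard_eq_catalan : ∀ k, avCard k = catalan k := by
  intro k
  induction k using Nat.strong_induction_on with
  | _ k ih =>
    match k with
    | 0 => rw [avCard_zero, catalan_zero]
    | m + 1 =>
      rw [avCard_succ, catalan_succ]
      refine Finset.sum_congr rfl fun i _ => ?_
      have hi := i.isLt
      rw [ih i (by omega), ih (m - i) (by omega)]

end Card

end Rec

section Valley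

variable {m : ℕ}

def one (m : ℕ) : Fin (m + 2) := ⟨1, by omega⟩

abbrev VPerm (m : ℕ) := {π : Equiv.Perm (Fin (m + 2)) // Avoids231 ⇑π ∧ π (one m) = 0}

def posOf (i : ℕ) : ℕ := if i = 0 then 0 else i + 1

lemma posOf_lt {i : ℕ} (h : i < m + 1) : posOf i < m + 2 := by unfold posOf; split <;> omega

lemma posOf_ne_one (i : ℕ) : posOf i ≠ 1 := by unfold posOf; split <;> omega

lemma posOf_mono {i j : ℕ} (h : i < j) : posOf i < posOf j := by
  unfold posOf; split <;> split <;> omega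

section FwdD

variable (π : Equiv.Perm (Fin (m + 2)))

lemma apply_posOf_ne (h0 : π (one m) = 0) {i : ℕ} (h : i < m + 1) : (π ⟨posOf i, posOf_lt h⟩).val ≠ 0 := by
  intro hc
  have h2 : π ⟨posOf i, posOf_lt h⟩ = 0 := Fin.ext (by simpa using hc)
  rw [← h0] at h2
  have h3 := congrArg Fin.val (π.injective h2)
  simp only [one] at h3
  exact posOf_ne_one i h3

def fwdDfun (h0 : π (one m) = 0) : Fin (m + 1) → Fin (m + 1) := fun i =>
  ⟨(π ⟨posOf i.val, posOf_lt i.isLt⟩).val - 1, by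
    have h1 := apply_posOf_ne π h0 i.isLt
    have h2 := Fin.is_le (π ⟨posOf i.val, posOf_lt i.isLt⟩)
    omega⟩

lemma fwdDfun_inj (h0 : π (one m) = 0) : Function.Injective (fwdDfun π h0) := by
  intro a b hab
  have h1 := congrArg Fin.val hab
  simp only [fwdDfun] at h1
  have ha := apply_posOf_ne π h0 a.isLt
  have hb := apply_posOf_ne π h0 b.isLt
  have h2 : (π ⟨posOf a.val, posOf_lt a.isLt⟩).val = (π ⟨posOf b.val, posOf_lt b.isLt⟩).val := by
    omega
  have h3 := congrArg Fin.val (π.injective (Fin.ext h2))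
  simp only [Fin.mk.injEq] at h3 ⊢
  apply Fin.ext
  simp only [posOf] at h3
  split at h3 <;> split at h3 <;> omega

lemma fwdDfun_av (h0 : π (one m) = 0) (hAv : Avoids231 ⇑π) : Avoids231 (fwdDfun π h0) := by
  rintro ⟨i, j, k, hij, hjk, h1, h2⟩
  have h1' := Fin.lt_def.mp h1
  have h2' := Fin.lt_def.mp h2
  simp only [fwdDfun] at h1' h2'
  have hi := apply_posOf_ne π h0 i.isLt
  have hj := apply_posOf_ne π h0 j.isLt
  have hk := apply_posOf_ne π h0 k.isLt
  exact hAv ⟨⟨posOf i.val, posOf_lt i.isLt⟩, ⟨posOf j.val, posOf_lt j.isLt⟩,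
    ⟨posOf k.val, posOf_lt k.isLt⟩,
    Fin.mk_lt_mk.mpr (posOf_mono (Fin.lt_def.mp hij)),
    Fin.mk_lt_mk.mpr (posOf_mono (Fin.lt_def.mp hjk)),
    Fin.lt_def.mpr (by omega), Fin.lt_def.mpr (by omega)⟩

end FwdD

noncomputable def fwdD (x : VPerm m) : AvPerm (m + 1) :=
  ⟨mkPerm (fwdDfun x.1 x.2.2) (fwdDfun_inj x.1 x.2.2), fwdDfun_av x.1 x.2.2 x.2.1⟩

lemma fwdD_inj : Function.Injective (fwdD (m := m)) := by
  rintro ⟨π, hAv, h0⟩ ⟨π', hAv', h0'⟩ h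
  have hfun : ∀ i : Fin (m + 1), fwdDfun π h0 i = fwdDfun π' h0' i := by
    intro i
    have := congrArg (fun z => (z.1 : Fin (m + 1) → Fin (m + 1)) i) h
    simpa [fwdD] using this
  apply Subtype.ext
  apply Equiv.ext
  intro j
  by_cases hj : j.val = 1
  · have : j = one m := Fin.ext (by simpa [one] using hj)
    rw [this, h0, h0']
  · have hjlt := j.isLt
    have hi : j.val - 1 < m + 1 := by omega
    have hpos : posOf (j.val - 1) = j.val := by unfold posOf; split <;> omega
    have key : ∀ (ρ : Equiv.Perm (Fin (m + 2))) (hρ : ρ (one m) = 0) (i : Fin (m + 1)),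
        (ρ ⟨posOf i.val, posOf_lt i.isLt⟩).val = (fwdDfun ρ hρ i).val + 1 := by
      intro ρ hρ i
      have := apply_posOf_ne ρ hρ i.isLt
      simp only [fwdDfun]
      have h2 := Fin.is_le (ρ ⟨posOf i.val, posOf_lt i.isLt⟩)
      omega
    have e1 := key π h0 ⟨j.val - 1, hi⟩
    have e2 := key π' h0' ⟨j.val - 1, hi⟩
    have h1 := congrArg Fin.val (hfun ⟨j.val - 1, hi⟩)
    have hv : (π ⟨posOf (⟨j.val - 1, hi⟩ : Fin (m + 1)).val,
        posOf_lt (⟨j.val - 1, hi⟩ : Fin (m + 1)).isLt⟩).val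
        = (π' ⟨posOf (⟨j.val - 1, hi⟩ : Fin (m + 1)).val,
          posOf_lt (⟨j.val - 1, hi⟩ : Fin (m + 1)).isLt⟩).val := by omega
    have h3 : (⟨posOf (⟨j.val - 1, hi⟩ : Fin (m + 1)).val,
        posOf_lt (⟨j.val - 1, hi⟩ : Fin (m + 1)).isLt⟩ : Fin (m + 2)) = j :=
      Fin.ext (by simpa using hpos)
    rw [h3] at hv
    exact Fin.ext hv

section BwdD

variable (σ : Equiv.Perm (Fin (m + 1)))

def bwdDfun : Fin (m + 2) → Fin (m + 2) := fun j =>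
  if h : j.val = 1 then 0
  else ⟨(σ ⟨j.val - 1, by have := j.isLt; omega⟩).val + 1, Nat.succ_lt_succ (Fin.is_lt _)⟩

lemma bwdDfun_val_one {j : Fin (m + 2)} (h : j.val = 1) : (bwdDfun σ j).val = 0 := by
  simp [bwdDfun, h]

lemma bwdDfun_spec {j : Fin (m + 2)} (h : ¬ j.val = 1) :
    ∃ x : Fin (m + 1), x.val = j.val - 1 ∧ (bwdDfun σ j).val = (σ x).val + 1 :=
  ⟨⟨j.val - 1, by have := j.isLt; omega⟩, rfl, by simp [bwdDfun, h]⟩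

lemma bwdDfun_inj : Function.Injective (bwdDfun σ) := by
  intro a b hab
  have hv := congrArg Fin.val hab
  by_cases ha : a.val = 1 <;> by_cases hb : b.val = 1
  · exact Fin.ext (by omega)
  · obtain ⟨x, hx, he⟩ := bwdDfun_spec σ hb
    rw [bwdDfun_val_one σ ha, he] at hv
    omega
  · obtain ⟨x, hx, he⟩ := bwdDfun_spec σ ha
    rw [bwdDfun_val_one σ hb, he] at hv
    omega
  · obtain ⟨x, hx, he⟩ := bwdDfun_spec σ ha
    obtain ⟨x', hx', he'⟩ := bwdDfun_spec σ hb
    rw [he, he'] at hv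
    have : x = x' := σ.injective (Fin.ext (by omega))
    have hxx := congrArg Fin.val this
    have hav := a.isLt; have hbv := b.isLt
    exact Fin.ext (by omega)

lemma bwdDfun_av (hσ : Avoids231 ⇑σ) : Avoids231 (bwdDfun σ) := by
  rintro ⟨i, j, k, hij, hjk, h1, h2⟩
  have hij' := Fin.lt_def.mp hij
  have hjk' := Fin.lt_def.mp hjk
  have h1' := Fin.lt_def.mp h1
  have h2' := Fin.lt_def.mp h2
  have hi : ¬ i.val = 1 := by
    intro h
    rw [bwdDfun_val_one σ h] at h1'
    omega
  have hj : ¬ j.val = 1 := by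
    intro h
    rw [bwdDfun_val_one σ h] at h2'
    omega
  have hk : ¬ k.val = 1 := by intro h; omega
  obtain ⟨xi, hxi, ei⟩ := bwdDfun_spec σ hi
  obtain ⟨xj, hxj, ej⟩ := bwdDfun_spec σ hj
  obtain ⟨xk, hxk, ek⟩ := bwdDfun_spec σ hk
  rw [ei, ej] at h2'
  rw [ek, ei] at h1'
  exact hσ ⟨xi, xj, xk, Fin.lt_def.mpr (by omega), Fin.lt_def.mpr (by omega),
    Fin.lt_def.mpr (by omega), Fin.lt_def.mpr (by omega)⟩

end BwdD

noncomputable def bwdD (y : AvPerm (m + 1)) : VPerm m :=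
  ⟨mkPerm (bwdDfun y.1) (bwdDfun_inj y.1), bwdDfun_av y.1 y.2,
    Fin.ext (bwdDfun_val_one y.1 rfl)⟩

lemma bwdD_inj : Function.Injective (bwdD (m := m)) := by
  rintro ⟨σ, hσ⟩ ⟨σ', hσ'⟩ h
  have hfun : ∀ j : Fin (m + 2), bwdDfun σ j = bwdDfun σ' j := by
    intro j
    have := congrArg (fun z => (z.1 : Fin (m + 2) → Fin (m + 2)) j) h
    simpa [bwdD] using this
  apply Subtype.ext
  apply Equiv.ext
  intro i
  have hilt := i.isLt
  have hjne : ¬ (⟨posOf i.val, posOf_lt i.isLt⟩ : Fin (m + 2)).val = 1 := posOf_ne_one i.val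
  obtain ⟨x, hx, he⟩ := bwdDfun_spec σ hjne
  obtain ⟨x', hx', he'⟩ := bwdDfun_spec σ' hjne
  have hv := congrArg Fin.val (hfun ⟨posOf i.val, posOf_lt i.isLt⟩)
  have hxi : x = i := Fin.ext (by simp only [posOf] at hx ⊢; split at hx <;> omega)
  have hxi' : x' = i := Fin.ext (by simp only [posOf] at hx' ⊢; split at hx' <;> omega)
  rw [hxi] at he
  rw [hxi'] at he'
  have hgoal : σ i = σ' i := Fin.ext (by omega)
  exact hgoal

lemma card_VPerm (m : ℕ) : Nat.card (VPerm m) = avCard (m + 1) :=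
  le_antisymm (Nat.card_le_card_of_injective _ fwdD_inj)
    (Nat.card_le_card_of_injective _ bwdD_inj)

lemma valley_iff (π : Equiv.Perm (Fin (m + 2))) (hAv : Avoids231 ⇑π)
    (ha : 1 < m + 2) (hb : 0 < m + 2) (hc : 2 < m + 2) :
    (π ⟨1, ha⟩ < π ⟨0, hb⟩ ∧ π ⟨1, ha⟩ < π ⟨2, hc⟩) ↔
      π (one m) = 0 := by
  constructor
  · rintro ⟨h10, h12⟩
    by_contra hne
    have hv1 : (π ⟨1, ha⟩).val ≠ 0 := fun h => hne (Fin.ext (by simpa [one] using h))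
    set q := π.symm 0 with hqdef
    have hq0 : π q = 0 := π.apply_symm_apply _
    have hq0v : (π q).val = 0 := by rw [hq0]; rfl
    have hqv0 : q.val ≠ 0 := by
      intro h
      have : q = ⟨0, hb⟩ := Fin.ext (by simpa using h)
      rw [this] at hq0v
      have := Fin.lt_def.mp h10
      omega
    have hqv1 : q.val ≠ 1 := by
      intro h
      have : q = ⟨1, ha⟩ := Fin.ext (by simpa using h)
      rw [this] at hq0v
      omega
    have hqv2 : q.val ≠ 2 := by
      intro h
      have : q = ⟨2, hc⟩ := Fin.ext (by simpa using h)
      rw [this] at hq0v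
      have := Fin.lt_def.mp h12
      omega
    exact hAv ⟨⟨1, ha⟩, ⟨2, hc⟩, q,
      Fin.mk_lt_mk.mpr (by omega), Fin.lt_def.mpr (by have := q.isLt; simp; omega),
      Fin.lt_def.mpr (by omega), h12⟩
  · intro h0
    have h1v : (π ⟨1, ha⟩).val = 0 := by
      have h1e : π ⟨1, ha⟩ = 0 := h0
      rw [h1e]; rfl
    constructor
    · refine Fin.lt_def.mpr ?_
      have hne0 : (π ⟨0, hb⟩).val ≠ 0 := by
        intro h
        have e0 : π ⟨0, hb⟩ = 0 := Fin.ext (by simpa using h)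
        have e1 : π (one m) = 0 := h0
        have h2 := congrArg Fin.val (π.injective (e0.trans e1.symm))
        simp [one] at h2
      omega
    · refine Fin.lt_def.mpr ?_
      have hne0 : (π ⟨2, hc⟩).val ≠ 0 := by
        intro h
        have e0 : π ⟨2, hc⟩ = 0 := Fin.ext (by simpa using h)
        have e1 : π (one m) = 0 := h0
        have h2 := congrArg Fin.val (π.injective (e0.trans e1.symm))
        simp [one] at h2
      omega

end Valley

end Count231

theorem count_av231_initial_valley (n : ℕ) (hn : 3 ≤ n) :
    Nat.card {π : Equiv.Perm (Fin n) // Avoids231 ⇑π ∧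
        π ⟨1, by omega⟩ < π ⟨0, by omega⟩ ∧ π ⟨1, by omega⟩ < π ⟨2, by omega⟩} =
      Nat.choose (2 * (n - 1)) (n - 1) / n := by
  obtain ⟨m, rfl⟩ : ∃ m, n = m + 2 := ⟨n - 2, by omega⟩
  have e1 : Nat.card {π : Equiv.Perm (Fin (m + 2)) // Avoids231 ⇑π ∧
      π ⟨1, by omega⟩ < π ⟨0, by omega⟩ ∧ π ⟨1, by omega⟩ < π ⟨2, by omega⟩}
      = Nat.card (Count231.VPerm m) :=
    Nat.card_congr (Equiv.subtypeEquivRight (fun π =>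
      and_congr_right fun hAv => Count231.valley_iff π hAv (by omega) (by omega) (by omega)))
  rw [e1, Count231.card_VPerm, Count231.avCard_eq_catalan, catalan_eq_centralBinom_div,
    Nat.centralBinom_eq_two_mul_choose]
  norm_num
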